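/- Let p and q be real polynomials with no common zeros, p having exactly s real zeros and q having exactly s−1 real zeros, all simple. If for every real λ all real zeros of p + λq are simple, then the real zeros of p strictly interlace the real zeros of q. -/

import Mathlib

open Polynomial Finset

/-- A nodup multiset is determined by an injective enumeration of its elements. -/
lemma multiset_eq_map_range {M : Multiset ℝ} {n : ℕ} (x : ℕ → ℝ)
    (hcard : M.card = n) (_hnodup : M.Nodup)
    (hmem : ∀ i, i < n → x i ∈ M)
    (hinj : ∀ i, i < n → ∀ j, j < n → x i = x j → i = j) :
    M = (Multiset.range n).map x := by
  have hnd : ((Multiset.range n).map x).Nodup := by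
    refine Multiset.Nodup.map_on ?_ (Multiset.nodup_range n)
    intro i hi j hj hij
    exact hinj i (Multiset.mem_range.1 hi) j (Multiset.mem_range.1 hj) hij
  have hle : (Multiset.range n).map x ≤ M := by
    rw [Multiset.le_iff_subset hnd]
    intro a ha
    obtain ⟨i, hi, rfl⟩ := Multiset.mem_map.1 ha
    exact hmem i (Multiset.mem_range.1 hi)
  exact (Multiset.eq_of_le_of_card_le hle (by simp [hcard])).symm

/-- Key analytic lemma: if `p` has roots at `a < b` and `q` never vanishes on `[a,b]`,
then some `p + λ q` has a multiple root, contradicting the simplicity hypothesis. -/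
lemma key_lemma (p q : Polynomial ℝ) (hp0 : p ≠ 0)
    (hsimple : ∀ lam : ℝ, (p + Polynomial.C lam * q).roots.Nodup)
    (a b : ℝ) (hab : a < b) (ha : p.IsRoot a) (hb : p.IsRoot b)
    (hq : ∀ t ∈ Set.Icc a b, q.eval t ≠ 0) : False := by
  set f : ℝ → ℝ := fun t => -(p.eval t / q.eval t) with hf
  have hqa : q.eval a ≠ 0 := hq a (Set.left_mem_Icc.2 hab.le)
  have hcont : ContinuousOn f (Set.Icc a b) :=
    ((p.continuous_aeval.continuousOn.div q.continuous_aeval.continuousOn hq).neg)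
  have hfa : f a = 0 := by simp [hf, ha.eq_zero]
  have hfb : f b = 0 := by simp [hf, hb.eq_zero]
  -- there is an interior point where f ≠ 0
  have hc : ∃ c ∈ Set.Ioo a b, f c ≠ 0 := by
    by_contra h
    push_neg at h
    have : p = 0 := by
      apply p.eq_zero_of_infinite_isRoot
      apply Set.Infinite.mono (s := Set.Ioo a b) _ (Set.Ioo_infinite hab)
      intro t ht
      have h0 := h t ht
      have hqt : q.eval t ≠ 0 := hq t (Set.Ioo_subset_Icc_self ht)
      have : p.eval t / q.eval t = 0 := by
        simpa [hf] using h0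
      rcases div_eq_zero_iff.1 this with h' | h'
      · exact h'
      · exact absurd h' hqt
    exact hp0 this
  obtain ⟨c, hcmem, hfc⟩ := hc
  -- find an interior local extremum with f ≠ 0
  have hd : ∃ d ∈ Set.Ioo a b, f d ≠ 0 ∧ deriv f d = 0 := by
    rcases hfc.lt_or_gt with hneg | hpos
    · obtain ⟨d, hdmem, hmin⟩ :=
        isCompact_Icc.exists_isMinOn (Set.nonempty_Icc.2 hab.le) hcont
      have hfd : f d < 0 := lt_of_le_of_lt (hmin (Set.Ioo_subset_Icc_self hcmem)) hneg
      have hdio : d ∈ Set.Ioo a b := by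
        rcases hdmem with ⟨h1, h2⟩
        constructor
        · rcases h1.lt_or_eq with h | h
          · exact h
          · exfalso; rw [h] at hfa; linarith
        · rcases h2.lt_or_eq with h | h
          · exact h
          · rw [h] at hfd; rw [hfb] at hfd; linarith
      have hloc : IsLocalMin f d := hmin.isLocalMin (Icc_mem_nhds hdio.1 hdio.2)
      exact ⟨d, hdio, hfd.ne, hloc.deriv_eq_zero⟩
    · obtain ⟨d, hdmem, hmax⟩ :=
        isCompact_Icc.exists_isMaxOn (Set.nonempty_Icc.2 hab.le) hcont
      have hfd : 0 < f d := lt_of_lt_of_le hpos (hmax (Set.Ioo_subset_Icc_self hcmem))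
      have hdio : d ∈ Set.Ioo a b := by
        rcases hdmem with ⟨h1, h2⟩
        constructor
        · rcases h1.lt_or_eq with h | h
          · exact h
          · exfalso; rw [h] at hfa; linarith
        · rcases h2.lt_or_eq with h | h
          · exact h
          · rw [h] at hfd; rw [hfb] at hfd; linarith
      have hloc : IsLocalMax f d := hmax.isLocalMax (Icc_mem_nhds hdio.1 hdio.2)
      exact ⟨d, hdio, hfd.ne', hloc.deriv_eq_zero⟩
  obtain ⟨d, hdio, hfd, hder⟩ := hd
  have hqd : q.eval d ≠ 0 := hq d (Set.Ioo_subset_Icc_self hdio)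
  -- compute the derivative of f at d
  have hP : HasDerivAt (fun t => p.eval t) (p.derivative.eval d) d := p.hasDerivAt d
  have hQ : HasDerivAt (fun t => q.eval t) (q.derivative.eval d) d := q.hasDerivAt d
  have hF : HasDerivAt f
      (-((p.derivative.eval d * q.eval d - p.eval d * q.derivative.eval d) /
        (q.eval d) ^ 2)) d := (hP.div hQ hqd).neg
  have hD0 : p.derivative.eval d * q.eval d - p.eval d * q.derivative.eval d = 0 := by
    have := hF.deriv
    rw [hder] at this
    have h2 : (q.eval d) ^ 2 ≠ 0 := pow_ne_zero _ hqd
    field_simp at this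
    linarith [this]
  set lam : ℝ := f d with hlam
  have hpd : p.eval d ≠ 0 := by
    intro h
    apply hfd
    simp [hlam, hf, h]
  set g : Polynomial ℝ := p + Polynomial.C lam * q with hg
  have hg0 : g ≠ 0 := by
    intro h
    have h1 : g.eval a = 0 := by rw [h]; simp
    rw [hg, eval_add, eval_mul, eval_C, ha.eq_zero] at h1
    have h2 : lam * q.eval a = 0 := by linarith
    rcases mul_eq_zero.1 h2 with h' | h'
    · exact hfd h'
    · exact hqa h'
  have hgd : g.IsRoot d := by
    show g.eval d = 0
    rw [hg]
    simp only [eval_add, eval_mul, eval_C, hlam, hf]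
    field_simp
    ring
  have hgd' : g.derivative.IsRoot d := by
    show g.derivative.eval d = 0
    rw [hg]
    simp only [derivative_add, derivative_C_mul, eval_add, eval_mul, eval_C, hlam, hf]
    field_simp
    linarith [hD0]
  have hmult : 1 < g.rootMultiplicity d :=
    (Polynomial.one_lt_rootMultiplicity_iff_isRoot hg0).2 ⟨hgd, hgd'⟩
  have hcount : g.roots.count d = g.rootMultiplicity d := g.count_roots
  have hle : g.roots.count d ≤ 1 := Multiset.nodup_iff_count_le_one.1 (hsimple lam) d
  omega

/-- Obreshkov-type theorem: if `p` and `q` have no common zeros, `p` has exactly `s`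
real zeros and `q` exactly `s-1` real zeros, all simple, and for every real `λ` all
real zeros of `p + λ q` are simple, then the real zeros of `p` strictly interlace the
real zeros of `q`. -/
theorem stmt_1 (s : ℕ) (hs : 1 ≤ s) (p q : Polynomial ℝ) (hp0 : p ≠ 0) (hq0 : q ≠ 0)
    (hcommon : ∀ t : ℝ, ¬(p.IsRoot t ∧ q.IsRoot t))
    (hpr : p.roots.card = s) (hps : p.roots.Nodup)
    (hqr : q.roots.card = s - 1) (hqs : q.roots.Nodup)
    (hsimple : ∀ lam : ℝ, (p + Polynomial.C lam * q).roots.Nodup) :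
    ∃ x y : ℕ → ℝ, StrictMonoOn x (Set.Iio s) ∧ StrictMonoOn y (Set.Iio (s - 1)) ∧
      p.roots = (Multiset.range s).map x ∧ q.roots = (Multiset.range (s - 1)).map y ∧
      ∀ i, i + 1 < s → x i < y i ∧ y i < x (i + 1) := by
  classical
  have hcardF : p.roots.toFinset.card = s := by
    rw [Multiset.toFinset_card_of_nodup hps, hpr]
  set X : Fin s ↪o ℝ := p.roots.toFinset.orderEmbOfFin hcardF with hX
  set x : ℕ → ℝ := fun i => if h : i < s then X ⟨i, h⟩ else 0 with hx
  have hxval : ∀ i (h : i < s), x i = X ⟨i, h⟩ := by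
    intro i h; simp [hx, dif_pos h]
  have hxroot : ∀ i, i < s → x i ∈ p.roots := by
    intro i h
    rw [hxval i h]
    exact Multiset.mem_toFinset.1 (p.roots.toFinset.orderEmbOfFin_mem hcardF ⟨i, h⟩)
  have hxmono : StrictMonoOn x (Set.Iio s) := by
    intro i hi j hj hij
    rw [hxval i hi, hxval j hj]
    exact X.strictMono (show (⟨i, hi⟩ : Fin s) < ⟨j, hj⟩ from hij)
  have hxinj : ∀ i, i < s → ∀ j, j < s → x i = x j → i = j := by
    intro i hi j hj hij
    by_contra hne
    rcases Nat.lt_or_ge i j with h | h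
    · exact absurd hij (hxmono (Set.mem_Iio.2 hi) (Set.mem_Iio.2 hj) h).ne
    · have : j < i := by omega
      exact absurd hij.symm (hxmono (Set.mem_Iio.2 hj) (Set.mem_Iio.2 hi) this).ne
  have hproots : p.roots = (Multiset.range s).map x :=
    multiset_eq_map_range x hpr hps hxroot hxinj
  -- between consecutive roots of `p` there is a root of `q`
  have hkey : ∀ i, i + 1 < s → ∃ c, x i < c ∧ c < x (i + 1) ∧ q.IsRoot c := by
    intro i hi
    by_contra h
    push_neg at h
    have hab : x i < x (i + 1) := hxmono (Set.mem_Iio.2 (by omega)) (Set.mem_Iio.2 hi) (by omega)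
    have hpa : p.IsRoot (x i) := (Polynomial.mem_roots hp0).1 (hxroot i (by omega))
    have hpb : p.IsRoot (x (i + 1)) := (Polynomial.mem_roots hp0).1 (hxroot (i+1) hi)
    refine key_lemma p q hp0 hsimple (x i) (x (i + 1)) hab hpa hpb ?_
    intro t ht hqt
    rcases ht with ⟨h1, h2⟩
    rcases h1.lt_or_eq with h1 | h1
    · rcases h2.lt_or_eq with h2 | h2
      · exact absurd hqt (h t h1 h2)
      · exact hcommon t ⟨h2 ▸ hpb, hqt⟩
    · exact hcommon t ⟨h1 ▸ hpa, hqt⟩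
  set y : ℕ → ℝ := fun i => if h : i + 1 < s then (hkey i h).choose else 0 with hy
  have hyspec : ∀ i (h : i + 1 < s), x i < y i ∧ y i < x (i + 1) ∧ q.IsRoot (y i) := by
    intro i h
    have := (hkey i h).choose_spec
    simpa [hy, dif_pos h] using this
  have hymono : StrictMonoOn y (Set.Iio (s - 1)) := by
    intro i hi j hj hij
    have hi' : i + 1 < s := by simp only [Set.mem_Iio] at hi; omega
    have hj' : j + 1 < s := by simp only [Set.mem_Iio] at hj; omega
    have h1 := (hyspec i hi').2.1
    have h2 := (hyspec j hj').1
    have h3 : x (i + 1) ≤ x j := by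
      rcases Nat.lt_or_ge (i + 1) j with h | h
      · exact (hxmono (Set.mem_Iio.2 (by omega)) (Set.mem_Iio.2 (by omega)) h).le
      · have : i + 1 = j := by omega
        rw [this]
    linarith
  have hyinj : ∀ i, i < s - 1 → ∀ j, j < s - 1 → y i = y j → i = j := by
    intro i hi j hj hij
    by_contra hne
    rcases Nat.lt_or_ge i j with h | h
    · exact absurd hij (hymono (Set.mem_Iio.2 hi) (Set.mem_Iio.2 hj) h).ne
    · have : j < i := by omega
      exact absurd hij.symm (hymono (Set.mem_Iio.2 hj) (Set.mem_Iio.2 hi) this).ne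
  have hyroot : ∀ i, i < s - 1 → y i ∈ q.roots := by
    intro i hi
    have hi' : i + 1 < s := by omega
    exact (Polynomial.mem_roots hq0).2 (hyspec i hi').2.2
  have hqroots : q.roots = (Multiset.range (s - 1)).map y :=
    multiset_eq_map_range y hqr hqs hyroot hyinj
  exact ⟨x, y, hxmono, hymono, hproots, hqroots, fun i hi =>
    ⟨(hyspec i hi).1, (hyspec i hi).2.1⟩⟩
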